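/- arXiv:2504.02806 — 3 statements merged into one kernel-verified Lean document; each statement's English description precedes it below -/
import Mathlib

section
/- Let G be a finite simple graph on n vertices, and for each vertex v let c(v) denote the order of the largest clique of G containing v (so c(v) = 1 if v is isolated). Then the number of edges of G satisfies |E(G)| ≤ ⌊(n/2) · Σ_{v ∈ V(G)} (c(v) − 1)/c(v)⌋, where the sum is over all vertices and is taken in the real numbers. -/
open Finset SimpleGraph

/-- `cliqueOrderAt G v` is the order of the largest clique of `G` containing `v`. -/
noncomputable def cliqueOrderAt {V : Type*} (G : SimpleGraph V) (v : V) : ℕ :=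
  sSup {r : ℕ | ∃ s : Finset V, G.IsNClique r s ∧ v ∈ s}

section Aux

variable {V : Type*} [Fintype V] [DecidableEq V] (G : SimpleGraph V) [DecidableRel G.Adj]

/-- order of the largest clique contained in `s` and containing `v` -/
noncomputable def locOrd (s : Finset V) (v : V) : ℕ :=
  sSup {r : ℕ | ∃ t : Finset V, t ⊆ s ∧ G.IsNClique r t ∧ v ∈ t}

/-- order of the largest clique contained in `s` -/
noncomputable def bigOrd (s : Finset V) : ℕ :=
  sSup {r : ℕ | ∃ t : Finset V, t ⊆ s ∧ G.IsNClique r t}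

variable {G}

lemma locOrd_bdd (s : Finset V) (v : V) :
    BddAbove {r : ℕ | ∃ t : Finset V, t ⊆ s ∧ G.IsNClique r t ∧ v ∈ t} := by
  refine ⟨s.card, fun r hr => ?_⟩
  obtain ⟨t, ht, hc, _⟩ := hr
  exact hc.card_eq ▸ Finset.card_le_card ht

lemma bigOrd_bdd (s : Finset V) :
    BddAbove {r : ℕ | ∃ t : Finset V, t ⊆ s ∧ G.IsNClique r t} := by
  refine ⟨s.card, fun r hr => ?_⟩
  obtain ⟨t, ht, hc⟩ := hr
  exact hc.card_eq ▸ Finset.card_le_card ht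

lemma le_locOrd {s t : Finset V} {v : V} {r : ℕ} (ht : t ⊆ s) (hc : G.IsNClique r t)
    (hv : v ∈ t) : r ≤ locOrd G s v :=
  le_csSup (locOrd_bdd s v) ⟨t, ht, hc, hv⟩

lemma le_bigOrd {s t : Finset V} {r : ℕ} (ht : t ⊆ s) (hc : G.IsNClique r t) :
    r ≤ bigOrd G s :=
  le_csSup (bigOrd_bdd s) ⟨t, ht, hc⟩

lemma one_le_locOrd {s : Finset V} {v : V} (hv : v ∈ s) : 1 ≤ locOrd G s v :=
  le_locOrd (Finset.singleton_subset_iff.2 hv)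
    (isNClique_singleton.2 rfl) (Finset.mem_singleton_self v)

lemma locOrd_spec {s : Finset V} {v : V} (hv : v ∈ s) :
    ∃ t : Finset V, t ⊆ s ∧ G.IsNClique (locOrd G s v) t ∧ v ∈ t :=
  Nat.sSup_mem ⟨1, Set.mem_setOf.2 ⟨{v}, Finset.singleton_subset_iff.2 hv,
    isNClique_singleton.2 rfl, Finset.mem_singleton_self v⟩⟩ (locOrd_bdd s v)

lemma bigOrd_spec (s : Finset V) :
    ∃ t : Finset V, t ⊆ s ∧ G.IsNClique (bigOrd G s) t :=
  Nat.sSup_mem ⟨0, Set.mem_setOf.2 ⟨∅, Finset.empty_subset s, isNClique_empty.2 rfl⟩⟩ (bigOrd_bdd s)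

lemma locOrd_le_bigOrd {s : Finset V} {v : V} (hv : v ∈ s) :
    locOrd G s v ≤ bigOrd G s := by
  obtain ⟨t, ht, hc, _⟩ := locOrd_spec (G := G) hv
  exact le_bigOrd ht hc

lemma locOrd_mono {s s' : Finset V} {v : V} (hss : s' ⊆ s) (hv : v ∈ s') :
    locOrd G s' v ≤ locOrd G s v := by
  obtain ⟨t, ht, hc, hvt⟩ := locOrd_spec (G := G) hv
  exact le_locOrd (ht.trans hss) hc hvt

/-- sum of "degrees into `s`" over `s` -/
def locDeg (G : SimpleGraph V) [DecidableRel G.Adj] (s : Finset V) : ℕ :=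
  ∑ u ∈ s, (s.filter (G.Adj u)).card

lemma main_ineq (G : SimpleGraph V) [DecidableRel G.Adj] (s : Finset V) :
    (locDeg G s : ℝ) ≤ (s.card : ℝ) * ∑ u ∈ s, (1 - 1 / (locOrd G s u : ℝ)) := by
  induction s using Finset.strongInduction with
  | _ s ih =>
  rcases Finset.eq_empty_or_nonempty s with rfl | hs
  · simp [locDeg]
  -- take a maximum clique K inside s
  obtain ⟨K, hKs, hKc⟩ := bigOrd_spec (G := G) s
  set ω : ℕ := bigOrd G s with hω
  have hω1 : 1 ≤ ω := by
    obtain ⟨v, hv⟩ := hs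
    exact le_bigOrd (Finset.singleton_subset_iff.2 hv) (isNClique_singleton.2 rfl)
  have hKcard : K.card = ω := hKc.card_eq
  have hKne : K.Nonempty := Finset.card_pos.1 (hKcard ▸ hω1)
  set s' : Finset V := s \ K with hs'
  have hsub : s' ⊂ s := by
    refine Finset.sdiff_ssubset hKs hKne
  have hcard : s'.card + ω = s.card := by
    rw [← hKcard]; exact Finset.card_sdiff_add_card_eq_card hKs
  -- notation
  have hKdisj : Disjoint s' K := Finset.sdiff_disjoint
  have hunion : s' ∪ K = s := Finset.sdiff_union_of_subset hKs
  -- per-vertex facts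
  have hfleω : ∀ u ∈ s, locOrd G s u ≤ ω := fun u hu => locOrd_le_bigOrd hu
  have hf1 : ∀ u ∈ s, 1 ≤ locOrd G s u := fun u hu => one_le_locOrd hu
  have hKf : ∀ v ∈ K, ω ≤ locOrd G s v := fun v hv =>
    le_locOrd hKs hKc hv
  -- edges from u ∈ s' to K bounded by locOrd - 1
  have hedge : ∀ u ∈ s', (K.filter (G.Adj u)).card + 1 ≤ locOrd G s u := by
    intro u hu
    have hus : u ∈ s := (Finset.sdiff_subset) hu
    have huK : u ∉ K := (Finset.mem_sdiff.1 hu).2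
    set T : Finset V := K.filter (G.Adj u) with hT
    have hTK : T ⊆ K := Finset.filter_subset _ _
    have huT : u ∉ T := fun h => huK (hTK h)
    have hclique : G.IsNClique (T.card + 1) (insert u T) := by
      constructor
      · have hcl : G.IsClique (T : Set V) := hKc.1.subset (by exact_mod_cast hTK)
        rw [Finset.coe_insert]
        refine hcl.insert ?_
        intro b hb _
        exact (Finset.mem_filter.1 hb).2
      · rw [Finset.card_insert_of_notMem huT]
    refine le_locOrd ?_ hclique (Finset.mem_insert_self u T)
    exact Finset.insert_subset hus (hTK.trans hKs)
  -- edges inside K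
  have hKK : ∀ v ∈ K, (K.filter (G.Adj v)).card + 1 ≤ ω := by
    intro v hv
    have h1 : K.filter (G.Adj v) ⊆ K.erase v := by
      intro x hx
      rcases Finset.mem_filter.1 hx with ⟨hxK, hadj⟩
      exact Finset.mem_erase.2 ⟨fun h => G.loopless.irrefl v (h ▸ hadj), hxK⟩
    calc (K.filter (G.Adj v)).card + 1 ≤ (K.erase v).card + 1 :=
          Nat.add_le_add_right (Finset.card_le_card h1) 1
      _ ≤ ω := hKcard ▸ Finset.card_erase_lt_of_mem hv
  -- decomposition of locDeg
  have hsplit : ∀ u : V, (s.filter (G.Adj u)).card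
      = (s'.filter (G.Adj u)).card + (K.filter (G.Adj u)).card := by
    intro u
    rw [← hunion, Finset.filter_union, Finset.card_union_of_disjoint]
    exact Finset.disjoint_filter_filter hKdisj
  have hswap : ∑ v ∈ K, (s'.filter (G.Adj v)).card = ∑ u ∈ s', (K.filter (G.Adj u)).card := by
    simp only [Finset.card_filter]
    rw [Finset.sum_comm]
    apply Finset.sum_congr rfl
    intro u _
    apply Finset.sum_congr rfl
    intro v _
    simp [G.adj_comm u v]
  have hdec : locDeg G s = locDeg G s' + 2 * (∑ u ∈ s', (K.filter (G.Adj u)).card)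
      + ∑ v ∈ K, (K.filter (G.Adj v)).card := by
    unfold locDeg
    rw [← Finset.sum_sdiff hKs]
    simp only [← hs', hsplit, Finset.sum_add_distrib, hswap]
    ring_nf
    try omega
  -- now go to reals
  set n : ℝ := (s.card : ℝ) with hndef
  set m : ℝ := (s'.card : ℝ) with hmdef
  set w : ℝ := (ω : ℝ) with hwdef
  have hw1 : (1 : ℝ) ≤ w := by rw [hwdef]; exact_mod_cast hω1
  have hnm : n = m + w := by
    simp only [n, m, w, ← hcard]; push_cast; ring
  set S : ℝ := ∑ u ∈ s', (1 - 1 / (locOrd G s u : ℝ)) with hS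
  set T : ℝ := ∑ v ∈ K, (1 - 1 / (locOrd G s v : ℝ)) with hT
  have hterm : ∀ u ∈ s, (0 : ℝ) ≤ 1 - 1 / (locOrd G s u : ℝ) := by
    intro u hu
    have h1 : (1 : ℝ) ≤ (locOrd G s u : ℝ) := by exact_mod_cast hf1 u hu
    have : 1 / (locOrd G s u : ℝ) ≤ 1 := by
      rw [div_le_one (by linarith)]; exact h1
    linarith
  have hsplit_sum : ∑ u ∈ s, (1 - 1 / (locOrd G s u : ℝ)) = S + T := by
    rw [hS, hT, ← Finset.sum_sdiff hKs, ← hs']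
  -- IH
  have hIH : (locDeg G s' : ℝ) ≤ m * S := by
    refine le_trans (ih s' hsub) ?_
    apply mul_le_mul_of_nonneg_left _ (by positivity)
    apply Finset.sum_le_sum
    intro u hu
    have h1 : (1 : ℕ) ≤ locOrd G s' u := one_le_locOrd hu
    have h2 : locOrd G s' u ≤ locOrd G s u := locOrd_mono hsub.subset hu
    have h1' : (1 : ℝ) ≤ (locOrd G s' u : ℝ) := by exact_mod_cast h1
    have h2' : (locOrd G s' u : ℝ) ≤ (locOrd G s u : ℝ) := by exact_mod_cast h2
    have := one_div_le_one_div_of_le (by linarith) h2'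
    linarith
  -- bound on cross edges
  have hA : ((∑ u ∈ s', (K.filter (G.Adj u)).card : ℕ) : ℝ)
      ≤ ∑ u ∈ s', ((locOrd G s u : ℝ) - 1) := by
    push_cast
    apply Finset.sum_le_sum
    intro u hu
    have := hedge u hu
    have : ((K.filter (G.Adj u)).card : ℝ) + 1 ≤ (locOrd G s u : ℝ) := by exact_mod_cast this
    linarith
  -- bound on edges inside K
  have hB : ((∑ v ∈ K, (K.filter (G.Adj v)).card : ℕ) : ℝ) ≤ w * (w - 1) := by
    calc ((∑ v ∈ K, (K.filter (G.Adj v)).card : ℕ) : ℝ)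
        ≤ ∑ v ∈ K, (w - 1) := by
          push_cast
          apply Finset.sum_le_sum
          intro v hv
          have := hKK v hv
          have : ((K.filter (G.Adj v)).card : ℝ) + 1 ≤ w := by rw [hwdef]; exact_mod_cast this
          linarith
      _ = w * (w - 1) := by
          rw [Finset.sum_const, nsmul_eq_mul, hKcard]
  -- T ≥ w - 1
  have hTw : (m + w) * (w - 1) ≤ (m + w) * T := by
    have hTbound : w - 1 ≤ T := by
      have : ∀ v ∈ K, (1 : ℝ) - 1 / w ≤ 1 - 1 / (locOrd G s v : ℝ) := by
        intro v hv
        have h2 : w ≤ (locOrd G s v : ℝ) := by rw [hwdef]; exact_mod_cast hKf v hv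
        have := one_div_le_one_div_of_le (by linarith : (0:ℝ) < w) h2
        linarith
      calc w - 1 = w * (1 - 1 / w) := by field_simp
        _ = ∑ _v ∈ K, (1 - 1/w) * 1 := by
            rw [Finset.sum_const, hKcard]; push_cast; ring
        _ ≤ T := by
            rw [hT]
            apply Finset.sum_le_sum
            intro v hv
            simpa using this v hv
    apply mul_le_mul_of_nonneg_left hTbound
    have hm0 : (0:ℝ) ≤ m := by positivity
    linarith
  -- pointwise key inequality summed
  have hkey : 2 * ∑ u ∈ s', ((locOrd G s u : ℝ) - 1) ≤ w * S + m * (w - 1) := by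
    have hpoint : ∀ u ∈ s', 2 * ((locOrd G s u : ℝ) - 1)
        ≤ w * (1 - 1 / (locOrd G s u : ℝ)) + (w - 1) := by
      intro u hu
      have hus : u ∈ s := Finset.sdiff_subset hu
      set c : ℝ := (locOrd G s u : ℝ) with hc
      have hc1 : (1 : ℝ) ≤ c := by rw [hc]; exact_mod_cast hf1 u hus
      have hcw : c ≤ w := by rw [hc, hwdef]; exact_mod_cast hfleω u hus
      have hc0 : (0 : ℝ) < c := by linarith
      have e1 : c * (1 - 1 / c) = c - 1 := by field_simp
      have hfrac : (0 : ℝ) ≤ 1 - 1 / c := by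
        have : 1 / c ≤ 1 := by rw [div_le_one hc0]; exact hc1
        linarith
      have e2 : c * (1 - 1 / c) ≤ w * (1 - 1 / c) :=
        mul_le_mul_of_nonneg_right hcw hfrac
      linarith
    calc 2 * ∑ u ∈ s', ((locOrd G s u : ℝ) - 1)
        = ∑ u ∈ s', 2 * ((locOrd G s u : ℝ) - 1) := by rw [Finset.mul_sum]
      _ ≤ ∑ u ∈ s', (w * (1 - 1 / (locOrd G s u : ℝ)) + (w - 1)) :=
          Finset.sum_le_sum hpoint
      _ = w * S + m * (w - 1) := by
          rw [Finset.sum_add_distrib, ← Finset.mul_sum, Finset.sum_const, nsmul_eq_mul, hS]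
  -- assemble
  rw [hsplit_sum, hnm]
  have hdec' : (locDeg G s : ℝ) = (locDeg G s' : ℝ)
      + 2 * ((∑ u ∈ s', (K.filter (G.Adj u)).card : ℕ) : ℝ)
      + ((∑ v ∈ K, (K.filter (G.Adj v)).card : ℕ) : ℝ) := by
    rw [hdec]; push_cast; ring
  have hexp : (m + w) * (S + T) = m * S + w * S + (m + w) * T := by ring
  set P : ℝ := ∑ u ∈ s', ((locOrd G s u : ℝ) - 1)
  rw [hdec', hexp]
  linarith

end Aux

theorem vertex_localized_turan_floor {V : Type*} [Fintype V] [DecidableEq V]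
    (G : SimpleGraph V) [DecidableRel G.Adj] :
    (G.edgeFinset.card : ℤ) ≤
      ⌊((Fintype.card V : ℝ) / 2) *
        ∑ v : V, ((cliqueOrderAt G v : ℝ) - 1) / (cliqueOrderAt G v)⌋ := by
  rw [Int.le_floor]
  push_cast
  have hco : ∀ v : V, cliqueOrderAt G v = locOrd G Finset.univ v := by
    intro v
    unfold cliqueOrderAt locOrd
    congr 1
    ext r
    constructor
    · rintro ⟨t, hc, hv⟩; exact ⟨t, Finset.subset_univ t, hc, hv⟩
    · rintro ⟨t, _, hc, hv⟩; exact ⟨t, hc, hv⟩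
  have hpos : ∀ v : V, 1 ≤ locOrd G Finset.univ v :=
    fun v => one_le_locOrd (Finset.mem_univ v)
  have hterm : ∀ v : V, ((cliqueOrderAt G v : ℝ) - 1) / (cliqueOrderAt G v)
      = 1 - 1 / (locOrd G Finset.univ v : ℝ) := by
    intro v
    rw [hco v]
    have h1 : (1 : ℝ) ≤ (locOrd G Finset.univ v : ℝ) := by exact_mod_cast hpos v
    have h0 : (locOrd G Finset.univ v : ℝ) ≠ 0 := by linarith
    field_simp
  have hmain := main_ineq G Finset.univ
  have hdeg : locDeg G Finset.univ = 2 * G.edgeFinset.card := by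
    unfold locDeg
    rw [← G.sum_degrees_eq_twice_card_edges]
    apply Finset.sum_congr rfl
    intro v _
    rw [← G.card_neighborFinset_eq_degree, G.neighborFinset_eq_filter]
  rw [hdeg] at hmain
  push_cast at hmain
  simp only [hterm]
  rw [Finset.card_univ] at hmain
  linarith
end

section
/- Let G be a finite simple graph on n vertices, and for each vertex v let c(v) denote the order of the largest clique of G containing v. Then |E(G)| ≤ (n/2) · Σ_{v ∈ V(G)} (c(v) − 1)/c(v), where the sum is taken in the real numbers. -/
open Finset SimpleGraph

section aux
set_option linter.unusedSectionVars false
set_option maxHeartbeats 1000000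
variable {V : Type*} [Fintype V] [DecidableEq V]

lemma coa_singleton (G : SimpleGraph V) (v : V) : G.IsNClique 1 {v} :=
  ⟨by simp [SimpleGraph.IsClique], by simp⟩

lemma coa_bdd (G : SimpleGraph V) (v : V) :
    BddAbove {r : ℕ | ∃ s : Finset V, G.IsNClique r s ∧ v ∈ s} := by
  refine ⟨Fintype.card V, fun r hr => ?_⟩
  obtain ⟨s, hs, -⟩ := hr
  rw [← hs.card_eq]
  exact Finset.card_le_univ s

lemma cnum_bdd (G : SimpleGraph V) :
    BddAbove {r : ℕ | ∃ s : Finset V, G.IsNClique r s} := by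
  refine ⟨Fintype.card V, fun r hr => ?_⟩
  obtain ⟨s, hs⟩ := hr
  rw [← hs.card_eq]
  exact Finset.card_le_univ s

lemma coa_le (G : SimpleGraph V) {v : V} {r : ℕ} {s : Finset V}
    (hs : G.IsNClique r s) (hv : v ∈ s) : r ≤ cliqueOrderAt G v :=
  le_csSup (coa_bdd G v) ⟨s, hs, hv⟩

lemma coa_one_le (G : SimpleGraph V) (v : V) : 1 ≤ cliqueOrderAt G v :=
  coa_le G (coa_singleton G v) (by simp)

lemma coa_spec (G : SimpleGraph V) (v : V) :
    ∃ s : Finset V, G.IsNClique (cliqueOrderAt G v) s ∧ v ∈ s := by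
  have h1 : (1 : ℕ) ∈ {r : ℕ | ∃ s : Finset V, G.IsNClique r s ∧ v ∈ s} :=
    ⟨{v}, coa_singleton G v, by simp⟩
  exact Nat.sSup_mem ⟨1, h1⟩ (coa_bdd G v)

lemma coa_mono {G H : SimpleGraph V} (h : G ≤ H) (v : V) :
    cliqueOrderAt G v ≤ cliqueOrderAt H v := by
  obtain ⟨s, hs, hv⟩ := coa_spec G v
  exact coa_le H ⟨hs.1.mono h, hs.2⟩ hv

/-- restriction of `G` to vertex set `A` (other vertices isolated) -/
def res (G : SimpleGraph V) (A : Finset V) : SimpleGraph V where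
  Adj u v := G.Adj u v ∧ u ∈ A ∧ v ∈ A
  symm := ⟨fun u v h => ⟨h.1.symm, h.2.2, h.2.1⟩⟩
  loopless := ⟨fun v h => G.loopless.irrefl v h.1⟩

lemma res_mono (G : SimpleGraph V) {A B : Finset V} (h : A ⊆ B) : res G A ≤ res G B :=
  fun {_ _} hadj => ⟨hadj.1, h hadj.2.1, h hadj.2.2⟩

lemma res_univ (G : SimpleGraph V) : res G univ = G := by
  ext u v; simp [res]

lemma key (G : SimpleGraph V) [DecidableRel G.Adj] (A : Finset V) :
    (∑ v ∈ A, ∑ u ∈ A, (if G.Adj v u then (1:ℝ) else 0)) ≤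
      (A.card : ℝ) * ∑ v ∈ A, (1 - 1/(cliqueOrderAt (res G A) v : ℝ)) := by
  induction A using Finset.strongInduction with
  | _ A ih =>
  have hterm_nonneg : ∀ (B : Finset V) (v : V),
      (0:ℝ) ≤ 1 - 1/(cliqueOrderAt (res G B) v : ℝ) := by
    intro B v
    have h1 : 1 ≤ cliqueOrderAt (res G B) v := coa_one_le _ v
    have h1' : (1:ℝ) ≤ (cliqueOrderAt (res G B) v : ℝ) := by exact_mod_cast h1
    have h2 : 1/(cliqueOrderAt (res G B) v : ℝ) ≤ 1 := by
      rw [div_le_one (by linarith)]; exact h1'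
    linarith
  by_cases hE : ∃ x ∈ A, ∃ y ∈ A, G.Adj x y
  case neg =>
    push_neg at hE
    have hzero : (∑ v ∈ A, ∑ u ∈ A, (if G.Adj v u then (1:ℝ) else 0)) = 0 := by
      refine Finset.sum_eq_zero fun v hv => Finset.sum_eq_zero fun u hu => ?_
      simp [hE v hv u hu]
    rw [hzero]
    exact mul_nonneg (by positivity) (Finset.sum_nonneg fun v _ => hterm_nonneg A v)
  case pos =>
  obtain ⟨x, hx, y, hy, hxy⟩ := hE
  set H := res G A with hH
  set S : Set ℕ := {r : ℕ | ∃ s : Finset V, H.IsNClique r s} with hS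
  have hSbdd : BddAbove S := cnum_bdd H
  have h2S : 2 ∈ S := by
    refine ⟨{x, y}, ?_, ?_⟩
    · intro a ha b hb hne
      simp only [Finset.coe_insert, Set.mem_insert_iff, Finset.coe_singleton,
        Set.mem_singleton_iff] at ha hb
      have hadj : H.Adj x y := ⟨hxy, hx, hy⟩
      rcases ha with rfl | rfl <;> rcases hb with rfl | rfl <;>
        first | exact absurd rfl hne | exact hadj | exact hadj.symm
    · rw [Finset.card_insert_of_notMem (by simp [hxy.ne]), Finset.card_singleton]
  set ω := sSup S with hω
  have hω2 : 2 ≤ ω := le_csSup hSbdd h2S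
  obtain ⟨K, hK⟩ : ∃ K : Finset V, H.IsNClique ω K := Nat.sSup_mem ⟨2, h2S⟩ hSbdd
  have hKcard : K.card = ω := hK.card_eq
  have hKA : K ⊆ A := by
    intro v hv
    obtain ⟨u, hu, hne⟩ := Finset.exists_mem_ne (show 1 < K.card by omega) v
    have hadj : H.Adj u v := hK.isClique (Finset.mem_coe.mpr hu) (Finset.mem_coe.mpr hv) hne
    exact hadj.2.2
  have hcoaK : ∀ v ∈ K, cliqueOrderAt H v = ω := by
    intro v hv
    refine le_antisymm ?_ (coa_le H hK hv)
    refine csSup_le_csSup hSbdd ⟨1, {v}, coa_singleton H v, by simp⟩ ?_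
    rintro r ⟨s, hs, -⟩; exact ⟨s, hs⟩
  set B := A \ K with hB
  have hBA : B ⊆ A := Finset.sdiff_subset
  have hKne : K.Nonempty := by rw [← Finset.card_pos, hKcard]; omega
  have hssub : B ⊂ A := Finset.sdiff_ssubset hKA hKne
  have hωA : ω ≤ A.card := hKcard ▸ Finset.card_le_card hKA
  have hBcard : B.card = A.card - ω := by rw [hB, Finset.card_sdiff_of_subset hKA, hKcard]
  have hBcardR : (B.card : ℝ) = (A.card : ℝ) - (ω : ℝ) := by
    rw [hBcard, Nat.cast_sub hωA]
  -- abbreviations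
  set t : V → ℝ := fun v => 1 - 1/(cliqueOrderAt H v : ℝ) with ht
  set T := ∑ v ∈ B, t v with hT
  have hTnonneg : (0:ℝ) ≤ T := Finset.sum_nonneg fun v _ => hterm_nonneg A v
  -- IH bound on B-B edges
  have hSBB : (∑ v ∈ B, ∑ u ∈ B, (if G.Adj v u then (1:ℝ) else 0))
      ≤ ((A.card:ℝ) - (ω:ℝ)) * T := by
    refine le_trans (ih B hssub) ?_
    rw [← hBcardR]
    apply mul_le_mul_of_nonneg_left ?_ (by positivity)
    refine Finset.sum_le_sum fun v _ => ?_
    have h := coa_mono (res_mono G hBA) v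
    have h1 : 1 ≤ cliqueOrderAt (res G B) v := coa_one_le _ v
    have h3 : 1/(cliqueOrderAt H v:ℝ) ≤ 1/(cliqueOrderAt (res G B) v : ℝ) :=
      one_div_le_one_div_of_le (by exact_mod_cast h1) (by exact_mod_cast h)
    simp only [ht]
    linarith
  -- number of K-neighbors
  set kv : V → ℕ := fun v => (K.filter (fun u => G.Adj v u)).card with hkv
  have hsumK : ∀ v : V, (∑ u ∈ K, (if G.Adj v u then (1:ℝ) else 0)) = (kv v : ℝ) := by
    intro v; rw [Finset.sum_boole]
  have hkvK : ∀ v ∈ K, kv v ≤ ω - 1 := by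
    intro v hv
    have hsub : K.filter (fun u => G.Adj v u) ⊆ K.erase v := by
      intro u hu
      rw [Finset.mem_filter] at hu
      exact Finset.mem_erase.mpr ⟨fun h => G.loopless.irrefl v (h ▸ hu.2), hu.1⟩
    calc kv v ≤ (K.erase v).card := Finset.card_le_card hsub
    _ = ω - 1 := by rw [Finset.card_erase_of_mem hv, hKcard]
  have hclique : ∀ v ∈ B,
      H.IsNClique (kv v + 1) (insert v (K.filter (fun u => G.Adj v u))) := by
    intro v hv
    have hvA : v ∈ A := hBA hv
    have hvK : v ∉ K := (Finset.mem_sdiff.mp hv).2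
    constructor
    · rw [Finset.coe_insert]
      refine SimpleGraph.IsClique.insert
        (hK.isClique.subset (Finset.coe_subset.mpr (Finset.filter_subset _ K))) ?_
      intro b hb hne
      have hb' := Finset.mem_filter.mp (Finset.mem_coe.mp hb)
      exact ⟨hb'.2, hvA, hKA hb'.1⟩
    · rw [Finset.card_insert_of_notMem (fun h => hvK (Finset.mem_filter.mp h).1)]
  have hc_ge : ∀ v ∈ B, kv v + 1 ≤ cliqueOrderAt H v :=
    fun v hv => coa_le H (hclique v hv) (Finset.mem_insert_self _ _)
  have hkv_lt : ∀ v ∈ B, kv v + 1 ≤ ω := by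
    intro v hv
    by_contra hcon
    push_neg at hcon
    have hle : kv v ≤ ω := hKcard ▸ Finset.card_le_card (Finset.filter_subset _ _)
    have hkveq : kv v = ω := by omega
    have hfeq : K.filter (fun u => G.Adj v u) = K :=
      Finset.eq_of_subset_of_card_le (Finset.filter_subset _ _) (le_of_eq (hKcard.trans hkveq.symm))
    have h2 : H.IsNClique (ω + 1) (insert v K) := by
      have h3 := hclique v hv; rwa [hfeq, hkveq] at h3
    have : ω + 1 ≤ ω := le_csSup hSbdd ⟨insert v K, h2⟩
    omega
  -- per-vertex inequality on B
  have hperv : ∀ v ∈ B, (kv v : ℝ) ≤ (ω:ℝ) * t v := by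
    intro v hv
    have hc := hc_ge v hv
    have hw := hkv_lt v hv
    have hone : (1:ℝ) ≤ (cliqueOrderAt H v : ℝ) := by exact_mod_cast coa_one_le H v
    have hcpos : (0:ℝ) < (cliqueOrderAt H v : ℝ) := by linarith
    have hc' : (kv v : ℝ) + 1 ≤ (cliqueOrderAt H v : ℝ) := by exact_mod_cast hc
    have hw' : (kv v : ℝ) + 1 ≤ (ω:ℝ) := by exact_mod_cast hw
    have hkvpos : (0:ℝ) ≤ (kv v : ℝ) := Nat.cast_nonneg _
    have heq : (ω:ℝ) * t v
        = ((ω:ℝ) * ((cliqueOrderAt H v:ℝ) - 1))/(cliqueOrderAt H v:ℝ) := by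
      simp only [ht]
      field_simp
    rw [heq, le_div_iff₀ hcpos]
    nlinarith [mul_nonneg (sub_nonneg.mpr hc') (by linarith : (0:ℝ) ≤ (ω:ℝ) - (kv v : ℝ)),
      mul_nonneg hkvpos (by linarith : (0:ℝ) ≤ (ω:ℝ) - (kv v : ℝ) - 1)]
  -- sum splitting
  have hsplit : ∀ f : V → ℝ, ∑ v ∈ A, f v = ∑ v ∈ K, f v + ∑ v ∈ B, f v := by
    intro f
    rw [hB, ← Finset.sum_union Finset.disjoint_sdiff, Finset.union_sdiff_of_subset hKA]
  have hsym : ∑ v ∈ K, ∑ u ∈ B, (if G.Adj v u then (1:ℝ) else 0)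
      = ∑ v ∈ B, ∑ u ∈ K, (if G.Adj v u then (1:ℝ) else 0) := by
    rw [Finset.sum_comm]
    exact Finset.sum_congr rfl fun v _ => Finset.sum_congr rfl fun u _ => if_congr (G.adj_comm u v) rfl rfl
  set X := ∑ v ∈ B, (kv v : ℝ) with hX
  have hXsum : ∑ v ∈ B, ∑ u ∈ K, (if G.Adj v u then (1:ℝ) else 0) = X :=
    Finset.sum_congr rfl fun v _ => hsumK v
  have hωR : (1:ℝ) ≤ (ω:ℝ) := by exact_mod_cast Nat.one_le_of_lt hω2
  have hcast_sub : ((ω - 1 : ℕ) : ℝ) = (ω:ℝ) - 1 := by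
    rw [Nat.cast_sub (by omega)]; norm_num
  have hSKK : ∑ v ∈ K, ∑ u ∈ K, (if G.Adj v u then (1:ℝ) else 0)
      ≤ (ω:ℝ) * ((ω:ℝ) - 1) := by
    calc ∑ v ∈ K, ∑ u ∈ K, (if G.Adj v u then (1:ℝ) else 0)
        = ∑ v ∈ K, (kv v : ℝ) := Finset.sum_congr rfl fun v _ => hsumK v
    _ ≤ ∑ v ∈ K, ((ω:ℝ) - 1) := by
        refine Finset.sum_le_sum fun v hv => ?_
        rw [← hcast_sub]
        exact_mod_cast hkvK v hv
    _ = (ω:ℝ) * ((ω:ℝ) - 1) := by rw [Finset.sum_const, hKcard, nsmul_eq_mul]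
  have hX1 : X ≤ ((A.card:ℝ) - (ω:ℝ)) * ((ω:ℝ) - 1) := by
    calc X ≤ ∑ v ∈ B, ((ω:ℝ) - 1) := by
          refine Finset.sum_le_sum fun v hv => ?_
          have h8 := hkv_lt v hv
          rw [← hcast_sub]
          exact_mod_cast Nat.le_sub_one_of_lt (Nat.lt_of_succ_le h8)
    _ = ((A.card:ℝ) - (ω:ℝ)) * ((ω:ℝ) - 1) := by
        rw [Finset.sum_const, nsmul_eq_mul, hBcardR]
  have hX2 : X ≤ (ω:ℝ) * T := by
    rw [hT, Finset.mul_sum]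
    exact Finset.sum_le_sum hperv
  have hKt : ∑ v ∈ K, t v = (ω:ℝ) - 1 := by
    have hterms : ∀ v ∈ K, t v = 1 - 1/(ω:ℝ) := by
      intro v hv; simp only [ht]; rw [hcoaK v hv]
    rw [Finset.sum_congr rfl hterms, Finset.sum_const, hKcard, nsmul_eq_mul]
    have hωpos : (0:ℝ) < (ω:ℝ) := by linarith
    field_simp
  -- assemble
  rw [hsplit (fun v => ∑ u ∈ A, (if G.Adj v u then (1:ℝ) else 0)),
    Finset.sum_congr rfl (fun v (_ : v ∈ K) => hsplit (fun u => if G.Adj v u then (1:ℝ) else 0)),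
    Finset.sum_congr rfl (fun v (_ : v ∈ B) => hsplit (fun u => if G.Adj v u then (1:ℝ) else 0)),
    Finset.sum_add_distrib, Finset.sum_add_distrib,
    hsplit t, hKt, hsym, hXsum]
  have hAω : (ω:ℝ) ≤ (A.card:ℝ) := by exact_mod_cast hωA
  nlinarith [hSKK, hX1, hX2, hSBB]

end aux

theorem vertex_localized_turan_weak {V : Type*} [Fintype V] [DecidableEq V]
    (G : SimpleGraph V) [DecidableRel G.Adj] :
    (G.edgeFinset.card : ℝ) ≤
      ((Fintype.card V : ℝ) / 2) *
        ∑ v : V, ((cliqueOrderAt G v : ℝ) - 1) / (cliqueOrderAt G v) := by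
  have h2E : (∑ v ∈ univ, ∑ u ∈ univ, (if G.Adj v u then (1:ℝ) else 0))
      = 2 * G.edgeFinset.card := by
    have h0 := G.sum_degrees_eq_twice_card_edges
    have h : ∀ v : V, (∑ u ∈ univ, (if G.Adj v u then (1:ℝ) else 0)) = (G.degree v : ℝ) := by
      intro v
      rw [Finset.sum_boole, SimpleGraph.degree, neighborFinset_eq_filter]
    rw [Finset.sum_congr rfl (fun v _ => h v)]
    exact_mod_cast congrArg (Nat.cast : ℕ → ℝ) h0
  have hkey := key G (univ : Finset V)
  rw [res_univ, h2E, Finset.card_univ] at hkey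
  have hsum : ∀ v : V, ((cliqueOrderAt G v : ℝ) - 1) / (cliqueOrderAt G v)
      = 1 - 1/(cliqueOrderAt G v : ℝ) := by
    intro v
    have h1 : 1 ≤ cliqueOrderAt G v := coa_one_le G v
    have hc : (cliqueOrderAt G v : ℝ) ≠ 0 := by
      have h1' : (1:ℝ) ≤ (cliqueOrderAt G v : ℝ) := by exact_mod_cast h1
      linarith
    field_simp
  rw [Finset.sum_congr rfl (fun v _ => hsum v)]
  linarith
end

section
/- Let r ≥ 1 and let G be a finite simple graph on n vertices that contains no clique on r + 1 vertices. Then |E(G)| = ⌊n²(r − 1)/(2r)⌋ holds if and only if G is isomorphic to the Turán graph T(n,r) and, writing s = n mod r, either s ≤ 2 or r·(s − 2) < s². -/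
open Finset SimpleGraph

/-- Edge count identity for the Turán graph. -/
lemma turan_count (n r : ℕ) (hr : 0 < r) :
    2 * #(turanGraph n r).edgeFinset + n * (n / r) + (n % r) * (n / r + 1) = n * n := by
  classical
  have hcnt : ∀ k : ℕ, #{x ∈ range n | x % r = k % r}
      = n / r + if k % r < n % r then 1 else 0 := by
    intro k
    have h := Nat.count_modEq_card n hr k
    rw [Nat.count_eq_card_filter_range] at h
    convert h using 3; exact Iff.rfl
  have hdeg : ∀ v : Fin n,
      (turanGraph n r).degree v + #{x ∈ range n | x % r = (v : ℕ) % r} = n := by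
    intro v
    have h1 : (turanGraph n r).degree v
        = #(univ.filter fun w : Fin n => ¬ ((w : ℕ) % r = (v : ℕ) % r)) := by
      rw [degree, neighborFinset_eq_filter]
      congr 1
      ext w
      rw [mem_filter, mem_filter]
      simp [turanGraph, ne_comm, eq_comm]
    have h2 : #(univ.filter fun w : Fin n => (w : ℕ) % r = (v : ℕ) % r)
        = #{x ∈ range n | x % r = (v : ℕ) % r} := by
      rw [card_filter, card_filter]
      exact Fin.sum_univ_eq_sum_range (fun i => if i % r = (v : ℕ) % r then 1 else 0) n
    rw [h1, ← h2, add_comm, card_filter_add_card_filter_not, card_univ,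
      Fintype.card_fin]
  have hsum := (turanGraph n r).sum_degrees_eq_twice_card_edges
  have h3 : ∑ v : Fin n, #{x ∈ range n | x % r = (v : ℕ) % r}
      = ∑ x ∈ range n, #{y ∈ range n | y % r = x % r} :=
    Fin.sum_univ_eq_sum_range (fun i => #{x ∈ range n | x % r = i % r}) n
  have h5 : #{x ∈ range n | x % r < n % r} = (n % r) * (n / r + 1) := by
    rw [card_eq_sum_card_fiberwise (f := fun x => x % r) (t := range (n % r))
      (fun x hx => mem_range.mpr (mem_filter.mp hx).2)]
    have hfib : ∀ b ∈ range (n % r),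
        #({x ∈ range n | x % r < n % r}.filter fun x => x % r = b) = n / r + 1 := by
      intro b hb
      have hb' : b < n % r := mem_range.mp hb
      have hbr : b < r := hb'.trans (Nat.mod_lt _ hr)
      have : ({x ∈ range n | x % r < n % r}.filter fun x => x % r = b)
          = {x ∈ range n | x % r = b % r} := by
        rw [filter_filter]
        apply filter_congr
        intro x _
        simp only [Nat.mod_eq_of_lt hbr]
        constructor
        · rintro ⟨_, h⟩; exact h
        · rintro rfl; exact ⟨hb', rfl⟩
      rw [this, hcnt b, Nat.mod_eq_of_lt hbr, if_pos hb']
    rw [Finset.sum_congr rfl hfib, Finset.sum_const, card_range, smul_eq_mul]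
  have h4 : ∑ x ∈ range n, #{y ∈ range n | y % r = x % r}
      = n * (n / r) + (n % r) * (n / r + 1) := by
    rw [Finset.sum_congr rfl (fun x _ => hcnt x), Finset.sum_add_distrib,
      Finset.sum_const, card_range, smul_eq_mul]
    congr 1
    rw [← h5, Finset.card_filter]
  calc 2 * #(turanGraph n r).edgeFinset + n * (n / r) + (n % r) * (n / r + 1)
      = (∑ v : Fin n, (turanGraph n r).degree v)
        + ∑ v : Fin n, #{x ∈ range n | x % r = (v : ℕ) % r} := by
        rw [hsum, h3, h4]; ring
    _ = ∑ v : Fin n, ((turanGraph n r).degree v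
        + #{x ∈ range n | x % r = (v : ℕ) % r}) := by rw [Finset.sum_add_distrib]
    _ = ∑ _v : Fin n, n := Finset.sum_congr rfl fun v _ => hdeg v
    _ = n * n := by simp [mul_comm]

lemma turan_arith (n r q s E : ℕ) (hr : 0 < r) (hs : s < r) (hn : n = q * r + s)
    (hE : 2 * E + n * q + s * (q + 1) = n * n) :
    ((E : ℤ) ≤ ⌊((n : ℚ) ^ 2 * ((r : ℚ) - 1)) / (2 * r)⌋) ∧
    (((E : ℤ) = ⌊((n : ℚ) ^ 2 * ((r : ℚ) - 1)) / (2 * r)⌋) ↔ s * (r - s) < 2 * r) := by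
  subst hn
  obtain ⟨d, hd⟩ : ∃ d, r = s + d := ⟨r - s, by omega⟩
  subst hd
  have hrs : s + d - s = d := by omega
  have hr0 : (0 : ℚ) < 2 * ((s + d : ℕ) : ℚ) := by
    have h1 : (0:ℕ) < s + d := hr
    have : (0:ℚ) < ((s+d : ℕ) : ℚ) := by exact_mod_cast h1
    linarith
  have hE' : (2 * E + (q * (s + d) + s) * q + s * (q + 1) : ℚ)
      = (q * (s + d) + s) * (q * (s + d) + s) := by exact_mod_cast hE
  have hnum : ((q * (s + d) + s : ℕ) : ℚ) ^ 2 * (((s + d : ℕ) : ℚ) - 1)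
      = (E : ℚ) * (2 * ((s + d : ℕ) : ℚ)) + (s : ℚ) * d := by
    push_cast
    linear_combination (-(s : ℚ) - d) * hE'
  have hsd : (0 : ℚ) ≤ (s : ℚ) * d := by positivity
  push_cast at hnum hr0
  constructor
  · rw [Int.le_floor]
    push_cast
    rw [le_div_iff₀ hr0, hnum]
    linarith
  · rw [eq_comm, Int.floor_eq_iff, hrs]
    push_cast
    constructor
    · rintro ⟨-, h2⟩
      rw [div_lt_iff₀ hr0, hnum] at h2
      have : (s : ℚ) * d < 2 * ((s : ℚ) + d) := by linarith
      exact_mod_cast this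
    · intro h
      have h' : (s : ℚ) * d < 2 * ((s : ℚ) + d) := by exact_mod_cast h
      constructor
      · rw [le_div_iff₀ hr0, hnum]; linarith
      · rw [div_lt_iff₀ hr0, hnum]; linarith

lemma turan_cond_equiv (r s : ℕ) (hr : 0 < r) (hs : s < r) :
    s * (r - s) < 2 * r ↔ (s ≤ 2 ∨ r * (s - 2) < s ^ 2) := by
  rcases le_or_gt s 2 with h | h
  · constructor
    · intro _; exact Or.inl h
    · intro _; interval_cases s <;> omega
  · have h2 : 2 ≤ s := by omega
    zify [hs.le, h2]
    constructor
    · intro hlt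
      refine Or.inr ?_
      nlinarith
    · rintro (h' | h')
      · exfalso; omega
      · nlinarith

theorem turan_floor_bound_equality {V : Type*} [Fintype V] [DecidableEq V]
    (G : SimpleGraph V) [DecidableRel G.Adj] {r : ℕ} (hr : 1 ≤ r)
    (hfree : G.CliqueFree (r + 1)) :
    (G.edgeFinset.card : ℤ) =
        ⌊((Fintype.card V : ℚ) ^ 2 * ((r : ℚ) - 1)) / (2 * r)⌋ ↔
      Nonempty (G ≃g turanGraph (Fintype.card V) r) ∧
        (Fintype.card V % r ≤ 2 ∨
          r * (Fintype.card V % r - 2) < (Fintype.card V % r) ^ 2) := by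
  classical
  set n := Fintype.card V with hn
  have h0 : 0 < r := hr
  have hsr : n % r < r := Nat.mod_lt _ h0
  obtain ⟨J, _, hJ⟩ := exists_isTuranMaximal (V := V) h0
  obtain ⟨gJ⟩ := hJ.nonempty_iso_turanGraph
  have hJT : #J.edgeFinset = #(turanGraph n r).edgeFinset := gJ.card_edgeFinset_eq
  have hGle : #G.edgeFinset ≤ #(turanGraph n r).edgeFinset := hJT ▸ hJ.2 hfree
  have key := turan_arith n r (n / r) (n % r) #(turanGraph n r).edgeFinset h0 hsr
    ((Nat.div_add_mod' n r).symm) (turan_count n r h0)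
  rw [← turan_cond_equiv r (n % r) h0 hsr]
  constructor
  · intro hE
    have hge : ((#(turanGraph n r).edgeFinset : ℕ) : ℤ) ≤ (#G.edgeFinset : ℕ) := by
      rw [hE]; exact key.1
    have heq : #G.edgeFinset = #(turanGraph n r).edgeFinset :=
      le_antisymm hGle (by exact_mod_cast hge)
    have hTm : G.IsTuranMaximal r :=
      ⟨hfree, fun ⦃H⦄ _ hH => heq ▸ hJT ▸ hJ.2 hH⟩
    refine ⟨hTm.nonempty_iso_turanGraph, key.2.mp ?_⟩
    rw [← heq]
    exact hE
  · rintro ⟨⟨f⟩, hcond⟩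
    have heq : #G.edgeFinset = #(turanGraph n r).edgeFinset := f.card_edgeFinset_eq
    rw [heq]
    exact key.2.mpr hcond
end
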